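/- Amnesiac flooding of a single message from multiple sources initiating in possibly different rounds always terminates: there is a round J such that no node sends the message in any round ≥ J. -/

import Mathlib

/-- Whether node `v` is "active" at round `t`: it receives the message at
round `t`, or it is a source initiating at round `t`. -/
def afAct {V : Type*} (S : ℕ → V → V → Prop) (I : Set V) (r : V → ℕ)
    (t : ℕ) (v : V) : Prop :=
  (∃ h, S t h v) ∨ (v ∈ I ∧ r v = t)

/-- The pair of integer potentials `(α, β)` associated to a flooding run. -/
noncomputable def afPot {V : Type*} (S : ℕ → V → V → Prop) (I : Set V)
    (r : V → ℕ) : ℕ → (V → ℤ) × (V → ℤ)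
  | 0 => (fun _ => 0, fun _ => 0)
  | (t+1) =>
      (fun v => (afPot S I r t).2 v +
        (@ite _ (afAct S I r t v) (Classical.propDecidable _) 0 1),
       fun v => (afPot S I r t).1 v + 1)

noncomputable def afA {V : Type*} (S : ℕ → V → V → Prop) (I : Set V)
    (r : V → ℕ) (t : ℕ) : V → ℤ := (afPot S I r t).1

noncomputable def afB {V : Type*} (S : ℕ → V → V → Prop) (I : Set V)
    (r : V → ℕ) (t : ℕ) : V → ℤ := (afPot S I r t).2

lemma afA_zero {V : Type*} (S : ℕ → V → V → Prop) (I : Set V) (r : V → ℕ)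
    (v : V) : afA S I r 0 v = 0 := rfl

lemma afB_zero {V : Type*} (S : ℕ → V → V → Prop) (I : Set V) (r : V → ℕ)
    (v : V) : afB S I r 0 v = 0 := rfl

lemma afB_succ {V : Type*} (S : ℕ → V → V → Prop) (I : Set V) (r : V → ℕ)
    (t : ℕ) (v : V) : afB S I r (t+1) v = afA S I r t v + 1 := rfl

lemma afA_succ_act {V : Type*} {S : ℕ → V → V → Prop} {I : Set V} {r : V → ℕ}
    {t : ℕ} {v : V} (h : afAct S I r t v) :
    afA S I r (t+1) v = afB S I r t v := by
  show afB S I r t v + (@ite _ (afAct S I r t v) (Classical.propDecidable _) 0 1) = _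
  rw [if_pos h]; ring

lemma afA_succ_not_act {V : Type*} {S : ℕ → V → V → Prop} {I : Set V} {r : V → ℕ}
    {t : ℕ} {v : V} (h : ¬ afAct S I r t v) :
    afA S I r (t+1) v = afB S I r t v + 1 := by
  show afB S I r t v + (@ite _ (afAct S I r t v) (Classical.propDecidable _) 0 1) = _
  rw [if_neg h]

/-- Corollary 4.5: amnesiac flooding of a single message from multiple
sources, initiating in possibly different rounds, always terminates. -/
theorem multi_source_multi_round_flooding_terminates
    {V : Type*} [Fintype V] (G : SimpleGraph V)
    (I : Set V) (hI : I.Nonempty) (r : V → ℕ)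
    (S : ℕ → V → V → Prop)
    (hS0 : ∀ g g' : V, ¬ S 0 g g')
    (hS1 : ∀ g g' : V, S 1 g g' ↔ (g ∈ I ∧ r g = 0 ∧ G.Adj g g'))
    (hS : ∀ i : ℕ, 1 ≤ i → ∀ g g' : V,
      S (i + 1) g g' ↔
        ((g ∈ I ∧ r g = i ∧ G.Adj g g') ∨
         (G.Adj g g' ∧ (∃ h, S i h g) ∧ ¬ S i g' g)))
    (hnoRecvInit : ∀ g ∈ I, ∀ g' : V, ¬ S (r g) g' g) :
    ∃ J : ℕ, ∀ i : ℕ, J ≤ i → ∀ g g' : V, ¬ S i g g' := by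
  classical
  set A := afA S I r with hA
  set B := afB S I r with hB
  set n := Fintype.card V with hn
  set R := Finset.univ.sup r with hR
  have hBs : ∀ (t : ℕ) (v : V), B (t+1) v = A t v + 1 := fun t v => afB_succ S I r t v
  have hB0 : ∀ v : V, B 0 v = 0 := fun v => rfl
  have hA0 : ∀ v : V, A 0 v = 0 := fun v => rfl
  have hAact : ∀ {t : ℕ} {v : V}, afAct S I r t v → A (t+1) v = B t v :=
    fun h => afA_succ_act h
  have hAnot : ∀ {t : ℕ} {v : V}, ¬ afAct S I r t v → A (t+1) v = B t v + 1 :=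
    fun h => afA_succ_not_act h
  -- every send is along an edge
  have hadj : ∀ t u v, S t u v → G.Adj u v := by
    intro t u v h
    match t with
    | 0 => exact absurd h (hS0 u v)
    | 1 => exact ((hS1 u v).1 h).2.2
    | (m+2) =>
        rcases (hS (m+1) (by omega) u v).1 h with h' | h'
        · exact h'.2.2
        · exact h'.1
  -- uniform one-step characterisation of the send relation
  have hL1 : ∀ t u v, S (t+1) u v ↔ (G.Adj u v ∧ afAct S I r t u ∧ ¬ S t v u) := by
    intro t u v
    cases t with
    | zero =>
        rw [hS1 u v]
        constructor
        · rintro ⟨h1, h2, h3⟩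
          exact ⟨h3, Or.inr ⟨h1, h2⟩, hS0 v u⟩
        · rintro ⟨hadj', hact, -⟩
          rcases hact with ⟨h, hh⟩ | ⟨h1, h2⟩
          · exact absurd hh (hS0 h u)
          · exact ⟨h1, h2, hadj'⟩
    | succ s =>
        rw [hS (s+1) (by omega) u v]
        constructor
        · rintro (⟨h1, h2, h3⟩ | ⟨h1, h2, h3⟩)
          · refine ⟨h3, Or.inr ⟨h1, h2⟩, ?_⟩
            have := hnoRecvInit u h1 v
            rwa [h2] at this
          · exact ⟨h1, Or.inl h2, h3⟩
        · rintro ⟨hadj', hact, hnb⟩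
          rcases hact with hrecv | ⟨h1, h2⟩
          · exact Or.inr ⟨hadj', hrecv, hnb⟩
          · exact Or.inl ⟨h1, h2, hadj'⟩
  -- receiving implies active
  have hrecv_act : ∀ t u v, S t u v → afAct S I r t v := fun t u v h => Or.inl ⟨u, h⟩
  -- the key potential invariant
  have hINV : ∀ t u v, G.Adj u v →
      (S t u v → B t v = A t u + 1) ∧ (¬ S t u v → B t v = A t u) := by
    intro t
    induction t with
    | zero =>
        intro u v _
        refine ⟨fun h => absurd h (hS0 u v), fun _ => ?_⟩
        rw [hB0, hA0]
    | succ t ih =>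
        intro u v huv
        have hBv : B (t+1) v = A t v + 1 := hBs t v
        by_cases hau : afAct S I r t u
        · by_cases hsvu : S t v u
          · -- u active but received from v: no send u→v at t+1
            have hno : ¬ S (t+1) u v := by
              rw [hL1 t u v]; rintro ⟨-, -, hc⟩; exact hc hsvu
            have hAu : A (t+1) u = B t u := hAact hau
            have hBu : B t u = A t v + 1 := (ih v u huv.symm).1 hsvu
            exact ⟨fun h => absurd h hno, fun _ => by rw [hBv, hAu, hBu]⟩
          · -- u active, not blocked: sends to v
            have hyes : S (t+1) u v := (hL1 t u v).2 ⟨huv, hau, hsvu⟩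
            have hAu : A (t+1) u = B t u := hAact hau
            have hBu : B t u = A t v := (ih v u huv.symm).2 hsvu
            exact ⟨fun _ => by rw [hBv, hAu, hBu], fun h => absurd hyes h⟩
        · -- u inactive: no send, and v didn't send to u either
          have hsvu : ¬ S t v u := fun h => hau (hrecv_act t v u h)
          have hno : ¬ S (t+1) u v := by
            rw [hL1 t u v]; rintro ⟨-, hc, -⟩; exact hau hc
          have hAu : A (t+1) u = B t u + 1 := hAnot hau
          have hBu : B t u = A t v := (ih v u huv.symm).2 hsvu
          exact ⟨fun h => absurd h hno, fun _ => by rw [hBv, hAu, hBu]⟩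
  -- A grows by at most 2 in two steps
  have hmono2 : ∀ t v, A (t+2) v ≤ A t v + 2 := by
    intro t v
    have h1 : A (t+2) v ≤ B (t+1) v + 1 := by
      by_cases h : afAct S I r (t+1) v
      · have h' : A (t+2) v = B (t+1) v := hAact h; omega
      · have h' : A (t+2) v = B (t+1) v + 1 := hAnot h; omega
    have h2 : B (t+1) v = A t v + 1 := hBs t v
    omega
  have hmono2m : ∀ m t v, A (t + 2*m) v ≤ A t v + 2*m := by
    intro m
    induction m with
    | zero => intro t v; simp
    | succ m ih =>
        intro t v
        have he : t + 2*(m+1) = t + 2*m + 2 := by omega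
        rw [he]
        have h1 : A (t + 2*m + 2) v ≤ A (t + 2*m) v + 2 := hmono2 (t + 2*m) v
        have h2 := ih t v
        push_cast
        omega
  -- active implies precise potential step
  have hact_step : ∀ t v, afAct S I r (t+1) v → A (t+2) v = A t v + 1 := by
    intro t v h
    have h1 : A (t+2) v = B (t+1) v := hAact h
    have h2 : B (t+1) v = A t v + 1 := hBs (t+1-1) v
    omega
  -- chains: every send traces back to an initiation event
  have chain : ∀ t u v, S t u v → ∃ (k : ℕ) (t0 : ℕ) (c : ℕ → V),
      t0 + k = t ∧ 1 ≤ k ∧ c k = v ∧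
      (∀ j, j < k → S (t0 + j + 1) (c j) (c (j+1))) ∧
      c 0 ∈ I ∧ r (c 0) = t0 := by
    intro t
    induction t with
    | zero => intro u v h; exact absurd h (hS0 u v)
    | succ t ih =>
        intro u v h
        rcases (hL1 t u v).1 h with ⟨huv, hact, hnb⟩
        rcases hact with ⟨w, hw⟩ | ⟨hui, hur⟩
        · -- u received at t from w: extend the chain
          rcases ih w u hw with ⟨k, t0, c, ht0, hk1, hck, hsend, hc0, hr0⟩
          refine ⟨k+1, t0, fun j => if j = k+1 then v else c j, by omega, by omega, ?_, ?_, ?_, ?_⟩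
          · simp
          · intro j hj
            by_cases hjk : j < k
            · have hne1 : j ≠ k + 1 := by omega
              have hne2 : j + 1 ≠ k + 1 := by omega
              simpa [hne1, hne2, show j ≠ k by omega] using hsend j hjk
            · have hjek : j = k := by omega
              subst hjek
              have hne1 : j ≠ j + 1 := by omega
              have ht : t0 + j + 1 = t + 1 := by omega
              simpa [hne1, ht, hck] using h
          · have hne : (0:ℕ) ≠ k + 1 := by omega
            simpa [hne] using hc0
          · have hne : (0:ℕ) ≠ k + 1 := by omega
            simpa [hne] using hr0
        · -- u initiates at t
          refine ⟨1, t, fun j => if j = 0 then u else v, by omega, le_refl 1, by simp, ?_, by simpa using hui, by simpa using hur⟩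
          intro j hj
          have hj0 : j = 0 := by omega
          subst hj0
          simpa using h
  -- the heart: any send happens no later than round R + 2n
  have hbound : ∀ t u v, S t u v → t ≤ R + 2*n := by
    intro t u v hsend
    rcases chain t u v hsend with ⟨k, t0, c, ht0, hk1, hck, hsends, hc0, hr0⟩
    -- potential value along the chain is linear
    have hg : ∀ j, j < k → A (t0 + j) (c (j+1)) = A t0 (c 1) + j := by
      intro j
      induction j with
      | zero => intro _; simp
      | succ j ihj =>
          intro hjk
          have hjk' : j < k := by omega
          have h1 : B (t0 + j + 2) (c (j+2)) = A (t0 + j + 2) (c (j+1)) + 1 := by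
            have hs2 : S (t0 + (j+1) + 1) (c (j+1)) (c (j+2)) := hsends (j+1) hjk
            have : t0 + (j+1) + 1 = (t0 + j + 1) + 1 := by omega
            rw [this] at hs2
            exact (hINV ((t0+j+1)+1) (c (j+1)) (c (j+2)) (hadj _ _ _ hs2)).1 hs2
          have h2 : B (t0 + j + 2) (c (j+2)) = A (t0 + j + 1) (c (j+2)) + 1 :=
            hBs (t0 + j + 1) (c (j+2))
          have h3 : A (t0 + j + 2) (c (j+1)) = A (t0 + j) (c (j+1)) + 1 := by
            refine hact_step (t0 + j) (c (j+1)) ?_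
            have hs1 : S (t0 + j + 1) (c j) (c (j+1)) := hsends j hjk'
            exact hrecv_act _ _ _ hs1
          have h4 := ihj hjk'
          have he : t0 + (j+1) = t0 + j + 1 := by omega
          rw [he, show j+1+1 = j+2 from rfl]
          push_cast at h4 ⊢
          omega
    -- no vertex repeats at the same parity along the chain
    have hdist : ∀ j1 j2, j1 < k → j2 < k → j1 % 2 = j2 % 2 →
        c (j1+1) = c (j2+1) → j1 = j2 := by
      have key : ∀ j1 j2, j1 < k → j2 < k → j1 % 2 = j2 % 2 →
          c (j1+1) = c (j2+1) → j1 < j2 → False := by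
        intro j1 j2 hj1 hj2 hpar hcc hlt
        set w := c (j1+1) with hw
        -- j2 = j1 + 2m with m ≥ 1
        obtain ⟨m, hm, hm1⟩ : ∃ m, j2 = j1 + 2*m ∧ 1 ≤ m := by
          refine ⟨(j2 - j1)/2, by omega, by omega⟩
        -- strict drop after activity at t0+j1+1
        have hdrop : A (t0 + j1 + 2) w = A (t0 + j1) w + 1 := by
          refine hact_step (t0 + j1) w ?_
          exact hrecv_act _ _ _ (hsends j1 hj1)
        -- monotone growth afterwards
        have hmon : A (t0 + j2) w ≤ A (t0 + j1 + 2) w + 2*((m-1 : ℕ) : ℤ) := by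
          have := hmono2m (m-1) (t0 + j1 + 2) w
          have he : t0 + j1 + 2 + 2*(m-1) = t0 + j2 := by omega
          rwa [he] at this
        -- but the chain value is linear
        have hg1 : A (t0 + j1) w = A t0 (c 1) + j1 := hg j1 hj1
        have hg2 : A (t0 + j2) w = A t0 (c 1) + j2 := by
          have := hg j2 hj2
          rwa [← hcc] at this
        omega
      intro j1 j2 hj1 hj2 hpar hcc
      rcases lt_trichotomy j1 j2 with h | h | h
      · exact absurd (key j1 j2 hj1 hj2 hpar hcc h) (fun x => x)
      · exact h
      · exact absurd (key j2 j1 hj2 hj1 hpar.symm hcc.symm h) (fun x => x)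
    -- pigeonhole: k ≤ 2n
    have hkle : k ≤ 2*n := by
      have hinj : Function.Injective
          (fun j : Fin k => ((c (j.1+1), j.1 % 2) : V × ℕ)) := by
        intro j1 j2 hj
        have h1 : c (j1.1+1) = c (j2.1+1) := congrArg Prod.fst hj
        have hpar : j1.1 % 2 = j2.1 % 2 := congrArg Prod.snd hj
        exact Fin.ext (hdist j1.1 j2.1 j1.2 j2.2 hpar h1)
      have hinj2 : Function.Injective
          (fun j : Fin k => ((c (j.1+1), ⟨j.1 % 2, Nat.mod_lt _ (by omega)⟩) : V × Fin 2)) := by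
        intro j1 j2 hj
        have h1 : c (j1.1+1) = c (j2.1+1) := congrArg Prod.fst hj
        have hpar : j1.1 % 2 = j2.1 % 2 := congrArg Fin.val (congrArg Prod.snd hj)
        exact Fin.ext (hdist j1.1 j2.1 j1.2 j2.2 hpar h1)
      have hcard := Fintype.card_le_of_injective _ hinj2
      simp only [Fintype.card_fin, Fintype.card_prod] at hcard
      omega
    have hr0R : t0 ≤ R := by
      rw [← hr0, hR]
      exact Finset.le_sup (Finset.mem_univ (c 0))
    omega
  refine ⟨R + 2*n + 1, fun i hi g g' hsend => ?_⟩
  have := hbound i g g' hsend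
  omega
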